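/- Let A be a unique factorization domain with fraction field K, and let M be a flat A-module. An element x of M ⊗_A K lies in the image of the canonical map M → M ⊗_A K (m ↦ m ⊗ 1) if and only if for every prime element q of A there exist m ∈ M and h ∈ A with q ∤ h such that h • x = m ⊗ 1 in M ⊗_A K. In other words, inside M ⊗_A K the module M equals the intersection of its localizations at all height one (equivalently, principal prime) primes. -/

import Mathlib

open TensorProduct Pointwise

section Aux

variable (A : Type*) [CommRing A] [IsDomain A]
variable (M : Type*) [AddCommGroup M] [Module A M] [Module.Flat A M]

/-- Key lemma: if `q` is prime, `q ∤ h` and `h • m = q • n`, then `m ∈ q • M`. -/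
lemma key_div {q h : A} (hq : Prime q) (hh : ¬ q ∣ h) {m n : M}
    (e : h • m = q • n) : ∃ m' : M, m = q • m' := by
  set I : Ideal A := Ideal.span {q} with hIdef
  have hIp : I.IsPrime := (Ideal.span_singleton_prime hq.ne_zero).mpr hq
  have hne : (Ideal.Quotient.mk I h) ≠ 0 := by
    rw [Ne, Ideal.Quotient.eq_zero_iff_mem, hIdef, Ideal.mem_span_singleton]
    exact hh
  have hreg0 : IsSMulRegular (A ⧸ I) (Ideal.Quotient.mk I h) := by
    intro x y hxy
    simpa only [smul_eq_mul] using mul_left_cancel₀ hne (by simpa [smul_eq_mul] using hxy)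
  have hreg : IsSMulRegular (A ⧸ I) h := by
    have := (isSMulRegular_algebraMap_iff (R := A) (A := A ⧸ I) (M := A ⧸ I) (r := h))
    exact this.mp (by simpa using hreg0)
  have hreg2 : IsSMulRegular ((A ⧸ I) ⊗[A] M) h := hreg.rTensor M
  have hz : (1 : A ⧸ I) ⊗ₜ[A] m = (0 : (A ⧸ I) ⊗[A] M) := by
    apply hreg2
    have h1 : h • ((1 : A ⧸ I) ⊗ₜ[A] m) = (1 : A ⧸ I) ⊗ₜ[A] (h • m) := by
      rw [tmul_smul]
    have h2 : (1 : A ⧸ I) ⊗ₜ[A] (q • n) = (q • (1 : A ⧸ I)) ⊗ₜ[A] n := by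
      rw [smul_tmul]
    have h3 : (q • (1 : A ⧸ I)) = 0 := by
      have : (Ideal.Quotient.mk I q) = 0 := by
        rw [Ideal.Quotient.eq_zero_iff_mem, hIdef]
        exact Ideal.mem_span_singleton_self q
      simpa [Algebra.smul_def, Algebra.algebraMap_eq_smul_one] using this
    show h • ((1 : A ⧸ I) ⊗ₜ[A] m) = h • (0 : (A ⧸ I) ⊗[A] M)
    rw [smul_zero, h1, e, h2, h3, zero_tmul]
  have hz2 : (Submodule.Quotient.mk m : M ⧸ (I • (⊤ : Submodule A M))) = 0 := by
    have := congrArg (TensorProduct.quotTensorEquivQuotSMul M I) hz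
    rw [map_zero] at this
    rw [← this]
    have : (1 : A ⧸ I) = Ideal.Quotient.mk I 1 := rfl
    rw [this, TensorProduct.quotTensorEquivQuotSMul_mk_tmul, one_smul]
  have hmem : m ∈ (I • (⊤ : Submodule A M)) := by
    rwa [Submodule.Quotient.mk_eq_zero] at hz2
  rw [hIdef, Submodule.ideal_span_singleton_smul] at hmem
  have hmem' : m ∈ q • ((⊤ : Submodule A M) : Set M) := by
    rw [← Submodule.coe_pointwise_smul]; exact hmem
  obtain ⟨m', -, hm'⟩ := Set.mem_smul_set.mp hmem'
  exact ⟨m', hm'.symm⟩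

/-- The canonical map `M → M ⊗ K` is injective for flat `M`. -/
lemma tmul_one_inj {m m' : M}
    (e : m ⊗ₜ[A] (1 : FractionRing A) = m' ⊗ₜ[A] (1 : FractionRing A)) : m = m' := by
  set f : M →ₗ[A] M ⊗[A] FractionRing A :=
    (LinearMap.lTensor M (Algebra.linearMap A (FractionRing A))) ∘ₗ
      (TensorProduct.rid A M).symm.toLinearMap with hf
  have hfapp : ∀ x : M, f x = x ⊗ₜ[A] (1 : FractionRing A) := by
    intro x
    simp [hf, TensorProduct.rid_symm_apply]
  have hinj : Function.Injective f := by
    rw [hf, LinearMap.coe_comp, LinearEquiv.coe_coe]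
    exact (Module.Flat.lTensor_preserves_injective_linearMap (M := M) _
      (IsFractionRing.injective A (FractionRing A))).comp
      (TensorProduct.rid A M).symm.injective
  apply hinj
  rw [hfapp, hfapp]; exact e

/-- Every element of `M ⊗ K` has a "denominator". -/
lemma exists_denominator (x : M ⊗[A] FractionRing A) :
    ∃ (d : A) (m : M), d ≠ 0 ∧ d • x = m ⊗ₜ[A] (1 : FractionRing A) := by
  induction x with
  | zero => exact ⟨1, 0, one_ne_zero, by simp⟩
  | tmul m k =>
    obtain ⟨⟨a, d⟩, rfl⟩ := IsLocalization.mk'_surjective (nonZeroDivisors A) k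
    refine ⟨d, a • m, nonZeroDivisors.coe_ne_zero d, ?_⟩
    have : (d : A) • (m ⊗ₜ[A] IsLocalization.mk' (FractionRing A) a d)
        = m ⊗ₜ[A] ((d : A) • IsLocalization.mk' (FractionRing A) a d) := by
      rw [tmul_smul]
    rw [this]
    have h1 : (d : A) • IsLocalization.mk' (FractionRing A) a d
        = algebraMap A (FractionRing A) a := by
      rw [Algebra.smul_def, IsLocalization.mul_mk'_eq_mk'_of_mul,
        IsLocalization.mk'_mul_cancel_left]
    rw [h1]
    have h2 : m ⊗ₜ[A] (algebraMap A (FractionRing A) a)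
        = (a • m) ⊗ₜ[A] (1 : FractionRing A) := by
      rw [Algebra.algebraMap_eq_smul_one, tmul_smul, smul_tmul']
    rw [h2]
  | add y z hy hz =>
    obtain ⟨d₁, m₁, hd₁, h₁⟩ := hy
    obtain ⟨d₂, m₂, hd₂, h₂⟩ := hz
    refine ⟨d₁ * d₂, d₂ • m₁ + d₁ • m₂, mul_ne_zero hd₁ hd₂, ?_⟩
    rw [smul_add, add_tmul]
    rw [show (d₁ * d₂) = (d₂ * d₁) from mul_comm _ _, mul_smul, h₁, mul_comm d₂ d₁, mul_smul, h₂]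
    rw [smul_tmul', smul_tmul']

end Aux

/-- Let `A` be a UFD with fraction field `K` and `M` a flat
`A`-module. An element `x` of `M ⊗[A] K` lies in the image of the canonical
map `M → M ⊗[A] K`, `m ↦ m ⊗ 1`, iff for every prime element `q` of `A` there
exist `m ∈ M` and `h ∈ A` with `q ∤ h` such that `h • x = m ⊗ 1`; i.e. inside
`M ⊗[A] K` the module `M` is the intersection of its localizations at all
principal (height one) primes. -/
theorem mem_range_iff_local_at_all_primes
    (A : Type*) [CommRing A] [IsDomain A] [UniqueFactorizationMonoid A]
    (M : Type*) [AddCommGroup M] [Module A M] [Module.Flat A M]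
    (x : M ⊗[A] FractionRing A) :
    (∃ m : M, m ⊗ₜ[A] (1 : FractionRing A) = x) ↔
      ∀ q : A, Prime q →
        ∃ (m : M) (h : A), ¬ q ∣ h ∧ h • x = m ⊗ₜ[A] (1 : FractionRing A) := by
  constructor
  · rintro ⟨m, rfl⟩ q hq
    exact ⟨m, 1, fun hd => hq.not_unit (isUnit_of_dvd_one hd), one_smul _ _⟩
  · intro hx
    obtain ⟨d, m₀, hd, hdx⟩ := exists_denominator A M x
    -- induction on d
    suffices H : ∀ d : A, d ≠ 0 → (∃ m : M, d • x = m ⊗ₜ[A] (1 : FractionRing A)) →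
        ∃ m : M, m ⊗ₜ[A] (1 : FractionRing A) = x by
      exact H d hd ⟨m₀, hdx⟩
    intro d
    induction d using UniqueFactorizationMonoid.induction_on_prime with
    | h₁ => exact fun h => absurd rfl h
    | h₂ u hu =>
      rintro - ⟨m, hm⟩
      obtain ⟨v, hv⟩ := hu.exists_left_inv
      refine ⟨v • m, ?_⟩
      calc (v • m) ⊗ₜ[A] (1 : FractionRing A) = v • (m ⊗ₜ[A] (1 : FractionRing A)) := by
            rw [smul_tmul']
        _ = v • (u • x) := by rw [hm]
        _ = (v * u) • x := by rw [smul_smul]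
        _ = x := by rw [hv, one_smul]
    | h₃ a p ha hp ih =>
      rintro - ⟨m, hm⟩
      obtain ⟨m', h, hph, hhx⟩ := hx p hp
      -- h • m = p • (a • m')
      have e1 : (h • m) ⊗ₜ[A] (1 : FractionRing A)
          = (p • (a • m')) ⊗ₜ[A] (1 : FractionRing A) := by
        rw [← smul_tmul', ← smul_tmul', ← smul_tmul', ← hm, ← hhx, smul_smul, smul_smul,
          smul_smul]
        congr 1
        ring
      have e2 : h • m = p • (a • m') := tmul_one_inj A M e1
      obtain ⟨m'', hm''⟩ := key_div A M hp hph e2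
      -- p • (a • x) = p • (m'' ⊗ 1)
      have hpreg : IsSMulRegular (FractionRing A) p := by
        intro s t hst0
        have hst : p • s = p • t := hst0
        have hp0 : algebraMap A (FractionRing A) p ≠ 0 := by
          simpa using fun h0 => hp.ne_zero (IsFractionRing.injective A (FractionRing A)
            (by simpa using h0))
        rw [Algebra.smul_def, Algebra.smul_def] at hst
        exact mul_left_cancel₀ hp0 hst
      have hpreg2 : IsSMulRegular (M ⊗[A] FractionRing A) p := hpreg.lTensor M
      have e3 : p • (a • x) = p • (m'' ⊗ₜ[A] (1 : FractionRing A)) := by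
        rw [smul_smul, hm, hm'', smul_tmul']
      exact ih ha ⟨m'', hpreg2 e3⟩
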